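/- In a two-player win-lose game with infinite past, if (s, r) and (s', r') are equilibria with r and r' in the same segment, then r ∈ W iff r' ∈ W (the same player wins both equilibrium runs). -/
import Mathlib


/-- Stages: non-positive integers. -/
abbrev Stage : Type := {n : ℤ // n ≤ 0}

/-- A run assigns an action to each stage. -/
abbrev Run (A : Type) : Type := Stage → A

/-- A position at stage `n` records the actions at all stages `k < n`. -/
abbrev Position (A : Type) (n : ℤ) : Type := {k : ℤ // k < n} → A

/-- The space of all positions. -/
abbrev Pos (A : Type) : Type := Σ n : Stage, Position A n.1

/-- The position induced by a run `r` at stage `n`. -/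
def restrictRun {A : Type} (r : Run A) (n : Stage) : Position A n.1 :=
  fun k => r ⟨k.1, le_trans k.2.le n.2⟩

/-- A run `r` is consistent with a strategy profile `s` (with owner function `ι`). -/
def ConsistentP {I A : Type} (ι : Pos A → I) (s : I → Pos A → A) (r : Run A) : Prop :=
  ∀ n : Stage, r n = s (ι ⟨n, restrictRun r n⟩) ⟨n, restrictRun r n⟩

/-- `(s, r)` is an equilibrium: `r` is consistent with `s` and, for each stage `n`, the profile
`s` induces a Nash equilibrium in the finite subgame starting at the position of `r` at stage
`n`. The latter is expressed as: for every player `i` and every profile `s'` differing from `s`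
only in player `i`'s strategy, the run that agrees with `r` before stage `n` and follows `s'`
from stage `n` onward gives player `i` at most `u i r`. -/
def Equilibrium {I A : Type} (ι : Pos A → I) (u : I → Run A → ℝ)
    (s : I → Pos A → A) (r : Run A) : Prop :=
  ConsistentP ι s r ∧
  ∀ n : Stage, ∀ i : I, ∀ s' : I → Pos A → A, (∀ j : I, j ≠ i → s' j = s j) →
    ∀ r' : Run A, (∀ k : Stage, k.1 < n.1 → r' k = r k) →
      (∀ m : Stage, n.1 ≤ m.1 →
        r' m = s' (ι ⟨m, restrictRun r' m⟩) ⟨m, restrictRun r' m⟩) →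
      u i r' ≤ u i r

/-- `s` is a strong equilibrium with unique consistent run `r`: `r` is the unique run
consistent with `s`, and for every player `i` and every deviation `s'i` of her strategy, every
run consistent with the deviated profile gives player `i` at most `u i r`. -/
def StrongEquilibrium {I A : Type} [DecidableEq I] (ι : Pos A → I) (u : I → Run A → ℝ)
    (s : I → Pos A → A) (r : Run A) : Prop :=
  ConsistentP ι s r ∧ (∀ r' : Run A, ConsistentP ι s r' → r' = r) ∧
  ∀ (i : I) (s'i : Pos A → A) (r' : Run A),
    ConsistentP ι (Function.update s i s'i) r' → u i r' ≤ u i r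

/-- The owner function of a two-player win-lose game: player `0` (player 1) is active at even
stages, player `1` (player 2) at odd stages. -/
def iotaWL {A : Type} : Pos A → Fin 2 := fun q => if Even q.1.1 then 0 else 1

/- Win-lose payoffs: player 1 gets the indicator of the winning set `W`, player 2 that of its
complement. -/
open Classical in
noncomputable def uWL {A : Type} (W : Set (Run A)) : Fin 2 → Run A → ℝ :=
  fun i r => if i = 0 then (if r ∈ W then 1 else 0) else (if r ∈ W then 0 else 1)

/-- Auxiliary recursive construction of the run following `τ` from stage `n` onward,
given history `r` before `n`; argument `j` is the offset from `n`. -/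
noncomputable def extAux {A : Type} [Nonempty A] (n : Stage) (r : Run A) (τ : Pos A → A) :
    (j : ℕ) → A
  | j =>
    if h : n.1 + j ≤ 0 then
      τ ⟨⟨n.1 + j, h⟩, fun k =>
        if hk : k.1 < n.1 then r ⟨k.1, le_trans hk.le n.2⟩
        else extAux n r τ (k.1 - n.1).toNat⟩
    else Classical.arbitrary A
  termination_by j => j
  decreasing_by
    have := k.2
    simp only [] at this
    omega

/-- The run agreeing with `r` before `n` and following `τ` from `n` onward. -/
noncomputable def extRun {A : Type} [Nonempty A] (n : Stage) (r : Run A) (τ : Pos A → A) :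
    Run A :=
  fun k => if k.1 < n.1 then r k else extAux n r τ (k.1 - n.1).toNat

lemma pos_congr {A : Type} (τ : Pos A → A) (n₁ n₂ : Stage) (h : n₁ = n₂)
    (p : Position A n₁.1) (q : Position A n₂.1)
    (hpq : ∀ (k : ℤ) (hk₁ : k < n₁.1) (hk₂ : k < n₂.1), p ⟨k, hk₁⟩ = q ⟨k, hk₂⟩) :
    τ ⟨n₁, p⟩ = τ ⟨n₂, q⟩ := by
  subst h
  have : p = q := funext fun k => hpq k.1 k.2 k.2
  rw [this]

lemma extRun_lt {A : Type} [Nonempty A] (n : Stage) (r : Run A) (τ : Pos A → A)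
    (k : Stage) (hk : k.1 < n.1) : extRun n r τ k = r k := by
  simp [extRun, hk]

lemma extRun_ge {A : Type} [Nonempty A] (n : Stage) (r : Run A) (τ : Pos A → A)
    (m : Stage) (hm : n.1 ≤ m.1) : extRun n r τ m = τ ⟨m, restrictRun (extRun n r τ) m⟩ := by
  have hlt : ¬ m.1 < n.1 := not_lt.mpr hm
  have hsum : n.1 + ((m.1 - n.1).toNat : ℤ) = m.1 := by omega
  conv_lhs => rw [extRun]
  rw [if_neg hlt, extAux, dif_pos (by omega : n.1 + ((m.1 - n.1).toNat : ℤ) ≤ 0)]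
  apply pos_congr
  · exact Subtype.ext hsum
  · intro k hk₁ hk₂
    simp only [restrictRun, extRun]
    by_cases hkn : k < n.1
    · simp [hkn]
    · simp [hkn]

lemma winner_mono {A : Type} [Fintype A] [Nonempty A] (W : Set (Run A))
    (s s' : Fin 2 → Pos A → A) (r r' : Run A)
    (h : Equilibrium iotaWL (uWL W) s r) (h' : Equilibrium iotaWL (uWL W) s' r')
    (n : Stage) (hseg : ∀ k : Stage, k.1 < n.1 → r k = r' k) :
    r ∈ W → r' ∈ W := by
  intro hrW
  classical
  -- combined profile: player 0 plays s 0, player 1 plays s' 1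
  set s₁ : Fin 2 → Pos A → A := Function.update s 1 (s' 1) with hs₁
  set s₂ : Fin 2 → Pos A → A := Function.update s' 0 (s 0) with hs₂
  set τ : Pos A → A := fun p => s₁ (iotaWL p) p with hτ
  set rr : Run A := extRun n r τ with hrr
  have hsame : ∀ p : Pos A, s₂ (iotaWL p) p = s₁ (iotaWL p) p := by
    intro p
    have hip : iotaWL p = 0 ∨ iotaWL p = 1 := by omega
    rcases hip with hip | hip <;>
      simp [hip, hs₁, hs₂, Function.update]
  -- player 2's deviation from (s, r):
  have h1 : uWL W 1 rr ≤ uWL W 1 r := by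
    refine h.2 n 1 s₁ ?_ rr (fun k hk => extRun_lt n r τ k hk) ?_
    · intro j hj
      simp [hs₁, Function.update, hj]
    · intro m hm
      exact extRun_ge n r τ m hm
  -- player 1's deviation from (s', r'):
  have h0 : uWL W 0 rr ≤ uWL W 0 r' := by
    refine h'.2 n 0 s₂ ?_ rr ?_ ?_
    · intro j hj
      simp [hs₂, Function.update, hj]
    · intro k hk
      rw [hrr, extRun_lt n r τ k hk]
      exact hseg k hk
    · intro m hm
      rw [hrr, extRun_ge n r τ m hm]
      exact (hsame _).symm
  -- conclude
  have hrrW : rr ∈ W := by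
    by_contra hc
    norm_num [uWL, hrW, hc] at h1
  by_contra hc
  norm_num [uWL, hrrW, hc] at h0

/-- in a two-player win-lose game with infinite past, two equilibria whose runs
lie in the same segment are won by the same player. -/
theorem same_winner_in_segment (A : Type) [Fintype A] [Nonempty A] (W : Set (Run A))
    (s s' : Fin 2 → Pos A → A) (r r' : Run A)
    (h : Equilibrium iotaWL (uWL W) s r) (h' : Equilibrium iotaWL (uWL W) s' r')
    (hseg : ∃ n : Stage, ∀ k : Stage, k.1 < n.1 → r k = r' k) :
    r ∈ W ↔ r' ∈ W := by
  obtain ⟨n, hn⟩ := hseg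
  exact ⟨winner_mono W s s' r r' h h' n hn,
    winner_mono W s' s r' r h' h n (fun k hk => (hn k hk).symm)⟩
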